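/- Let n be odd. Then for all l with 0 ≤ 2l ≤ n, one has |K_{2l}((n-1)/2, n)| = C((n-1)/2, l). -/

import Mathlib

open Finset

def K (i k n : ℕ) : ℤ :=
  ∑ j ∈ Finset.range (i + 1), (-1) ^ j * (Nat.choose k j) * (Nat.choose (n - k) (i - j))

open Polynomial in
lemma coeff_one_sub_X_pow' (m k : ℕ) :
    (((1:ℤ[X]) - X)^m).coeff k = (-1:ℤ)^k * m.choose k := by
  have h : ((1:ℤ[X]) - X)^m = C ((-1:ℤ)^m) * (X + C (-1))^m := by
    rw [C_pow, ← mul_pow]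
    congr 1
    simp only [map_neg, map_one]
    ring
  rw [h, coeff_C_mul, coeff_X_add_C_pow]
  rcases le_or_gt k m with hk | hk
  · have hs : (-1:ℤ)^m * (-1)^(m-k) = (-1)^k := by
      rw [← pow_add, show m + (m-k) = k + 2*(m-k) by omega, pow_add, pow_mul]
      ring
    rw [← mul_assoc, hs]
  · simp [Nat.choose_eq_zero_of_lt hk]

open Polynomial in
lemma coeff_one_sub_X_sq_pow' (m l : ℕ) :
    (((1:ℤ[X]) - X^2)^m).coeff (2*l) = (-1:ℤ)^l * m.choose l := by
  rw [sub_pow, finset_sum_coeff]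
  simp only [one_pow, mul_one, coeff_mul_natCast, ← pow_mul]
  have key : ∀ x ∈ Finset.range (m+1),
      (((-1:ℤ[X]) ^ (x + m) * X ^ (2*(m - x))).coeff (2*l)) * (m.choose x : ℤ)
      = if x = m - l ∧ l ≤ m then (-1:ℤ)^l * m.choose l else 0 := by
    intro x hx
    rw [Finset.mem_range] at hx
    have hc : ((-1:ℤ[X]) ^ (x + m)) = C ((-1:ℤ)^(x+m)) := by simp
    rw [hc, coeff_C_mul, coeff_X_pow]
    by_cases h : x = m - l ∧ l ≤ m
    · obtain ⟨rfl, hlm⟩ := h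
      have h2 : 2*l = 2*(m - (m - l)) := by omega
      rw [if_pos h2, if_pos ⟨rfl, hlm⟩, Nat.choose_symm hlm]
      have h3 : (m - l) + m = l + 2*(m-l) := by omega
      rw [h3, pow_add, pow_mul]
      ring
    · rw [if_neg, if_neg h]
      · ring
      · omega
  rw [Finset.sum_congr rfl key]
  by_cases hlm : l ≤ m
  · simp only [hlm, and_true]
    rw [Finset.sum_ite_eq' (Finset.range (m+1)) (m-l) (fun _ => (-1:ℤ)^l * m.choose l)]
    rw [if_pos (by simp)]
  · have h0 : ∀ x ∈ Finset.range (m+1),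
        (if x = m - l ∧ l ≤ m then (-1:ℤ)^l * m.choose l else 0) = 0 := by
      intro x _; rw [if_neg]; tauto
    rw [Finset.sum_congr rfl h0, Finset.sum_const_zero, Nat.choose_eq_zero_of_lt (by omega)]
    simp

open Polynomial in
lemma coeff_one_sub_X_sq_pow_odd' (m l : ℕ) :
    (((1:ℤ[X]) - X^2)^m).coeff (2*l+1) = 0 := by
  rw [sub_pow, finset_sum_coeff]
  apply Finset.sum_eq_zero
  intro x _
  have hc : ((-1:ℤ[X]) ^ (x + m)) = C ((-1:ℤ)^(x+m)) := by simp
  simp only [one_pow, mul_one, coeff_mul_natCast, ← pow_mul, hc, coeff_C_mul, coeff_X_pow]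
  rw [if_neg (by omega)]
  ring

open Polynomial in
lemma K_eq (m l : ℕ) : K (2*l) m (2*m+1) = (-1:ℤ)^l * m.choose l := by
  have h1 : K (2*l) m (2*m+1)
      = (((1:ℤ[X]) - X)^m * ((1:ℤ[X]) + X)^(m+1)).coeff (2*l) := by
    rw [coeff_mul, Finset.Nat.sum_antidiagonal_eq_sum_range_succ_mk, K]
    apply Finset.sum_congr rfl
    intro j _
    rw [coeff_one_sub_X_pow', coeff_one_add_X_pow]
    have : 2*m+1 - m = m+1 := by omega
    rw [this]
  have h2 : ((1:ℤ[X]) - X)^m * ((1:ℤ[X]) + X)^(m+1)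
      = ((1:ℤ[X]) - X^2)^m + X * ((1:ℤ[X]) - X^2)^m := by
    have hb : ((1:ℤ[X]) - X^2) = (1-X)*(1+X) := by ring
    rw [hb, mul_pow, pow_succ]
    ring
  rw [h1, h2, coeff_add]
  rcases Nat.eq_zero_or_pos l with rfl | hl
  · rw [coeff_one_sub_X_sq_pow', show 2*0 = 0 from rfl, mul_coeff_zero, coeff_X_zero, zero_mul,
      add_zero]
  · have h3 : 2*l = (2*(l-1)+1) + 1 := by omega
    rw [coeff_one_sub_X_sq_pow', h3, coeff_X_mul, coeff_one_sub_X_sq_pow_odd', add_zero]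

theorem stmt10 (n l : ℕ) (hn : Odd n) (hl : 2 * l ≤ n) :
    |K (2 * l) ((n - 1) / 2) n| = (Nat.choose ((n - 1) / 2) l : ℤ) := by
  obtain ⟨m, rfl⟩ := hn
  have hm : (2*m+1 - 1) / 2 = m := by omega
  rw [hm, K_eq, abs_mul, abs_pow, abs_neg, abs_one, one_pow, one_mul, Nat.abs_cast]
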